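/- With k chosen as a multiple of the length of every cycle of Λ and strictly greater than the length of every path of Λ, each map ψ_i: S → S̄ (sending s to the equivalence class of (i,s)) is injective. -/

import Mathlib

lemma psiAux_cancel {S : Type*} {S' : Set S} {φ : S → S} (hinj : Set.InjOn φ S') :
    ∀ (m : ℕ) (x y : S), (∀ j < m, φ^[j] x ∈ S') → (∀ j < m, φ^[j] y ∈ S') →
      φ^[m] x = φ^[m] y → x = y := by
  intro m
  induction m with
  | zero => intro x y _ _ h; simpa using h
  | succ m ih =>
    intro x y hx hy h
    rw [Function.iterate_succ_apply', Function.iterate_succ_apply'] at h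
    have h' : φ^[m] x = φ^[m] y :=
      hinj (hx m (Nat.lt_succ_self m)) (hy m (Nat.lt_succ_self m)) h
    exact ih x y (fun j hj => hx j (hj.trans (Nat.lt_succ_self m)))
      (fun j hj => hy j (hj.trans (Nat.lt_succ_self m))) h'

lemma psiAux_period {S : Type*} {S' : Set S} {φ : S → S} {E : S → S → Prop} {k : ℕ}
    (hinj : Set.InjOn φ S')
    (hE : ∀ a b, E a b ↔ a ∈ S' ∧ φ a = b)
    (hcyc : ∀ (n : ℕ) (f : ZMod (n + 1) → S), Function.Injective f →
      (∀ i, E (f i) (f (i + 1))) → (n + 1) ∣ k)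
    (s : S) (c : ℕ) (hc : 0 < c) (hper : φ^[c] s = s)
    (hchain : ∀ j < c, φ^[j] s ∈ S') :
    ∀ d, k ∣ d → φ^[d] s = s := by
  have hmodgen : ∀ c', 0 < c' → φ^[c'] s = s → ∀ a, φ^[a] s = φ^[a % c'] s := by
    intro c' hc' hper' a
    have key : ∀ q r, φ^[q * c' + r] s = φ^[r] s := by
      intro q
      induction q with
      | zero => simp
      | succ q ih =>
        intro r
        have h : (q + 1) * c' + r = (q * c' + r) + c' := by ring
        rw [h, Function.iterate_add_apply, hper', ih r]
    conv_lhs => rw [← Nat.div_add_mod a c', Nat.mul_comm]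
    exact key (a / c') (a % c')
  have hall : ∀ j, φ^[j] s ∈ S' := by
    intro j
    rw [hmodgen c hc hper j]
    exact hchain _ (Nat.mod_lt _ hc)
  have hex : ∃ c0, 0 < c0 ∧ φ^[c0] s = s := ⟨c, hc, hper⟩
  classical
  obtain ⟨hc0pos, hc0per⟩ := Nat.find_spec hex
  set c0 := Nat.find hex with hc0def
  have hmin : ∀ m, 0 < m → m < c0 → φ^[m] s ≠ s := by
    intro m hm hmc0 hms
    exact Nat.find_min hex hmc0 ⟨hm, hms⟩
  have hrep : ∀ a b, a < b → b < c0 → φ^[a] s = φ^[b] s → False := by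
    intro a b hab hb h
    have h2 : φ^[a] (φ^[b - a] s) = φ^[a] s := by
      rw [← Function.iterate_add_apply, Nat.add_sub_cancel' hab.le]
      exact h.symm
    have h3 := psiAux_cancel hinj a (φ^[b - a] s) s
      (fun j _ => by rw [← Function.iterate_add_apply]; exact hall _)
      (fun j _ => hall _) h2
    exact hmin (b - a) (by omega) (by omega) h3
  obtain ⟨n, hn⟩ : ∃ n, c0 = n + 1 := ⟨c0 - 1, (Nat.succ_pred_eq_of_pos hc0pos).symm⟩
  have hdvd : c0 ∣ k := by
    rw [hn]
    apply hcyc n (fun i => φ^[i.val] s)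
    · intro i j hij
      have hij' : φ^[i.val] s = φ^[j.val] s := hij
      by_contra hne
      have hvals : i.val ≠ j.val := fun h => hne (ZMod.val_injective _ h)
      have hi : i.val < c0 := by rw [hn]; exact ZMod.val_lt i
      have hj : j.val < c0 := by rw [hn]; exact ZMod.val_lt j
      rcases Nat.lt_or_ge i.val j.val with hlt | hge
      · exact hrep i.val j.val hlt hj hij'
      · exact hrep j.val i.val (by omega) hi hij'.symm
    · intro i
      rw [hE]
      refine ⟨hall _, ?_⟩
      show φ (φ^[i.val] s) = φ^[(i+1).val] s
      rw [← Function.iterate_succ_apply' φ i.val s]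
      have h1 : (i + 1).val = (i.val + 1) % (n + 1) := by
        rw [ZMod.val_add, ZMod.val_one_eq_one_mod, Nat.add_mod_mod]
      rw [hmodgen c0 hc0pos hc0per (i.val + 1), hmodgen c0 hc0pos hc0per (i+1).val, h1, hn]
      congr 1
      exact (Nat.mod_mod_of_dvd _ dvd_rfl).symm
  intro d hkd
  have hcd : c0 ∣ d := hdvd.trans hkd
  have hd0 : d % c0 = 0 := by obtain ⟨e, rfl⟩ := hcd; simp [Nat.mul_mod_right]
  rw [hmodgen c0 hc0pos hc0per d, hd0, Function.iterate_zero_apply]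

lemma psiAux_return {S : Type*} [Fintype S] {S' : Set S} {φ : S → S} {E : S → S → Prop}
    {k : ℕ} (hk : 0 < k)
    (hinj : Set.InjOn φ S')
    (hE : ∀ a b, E a b ↔ a ∈ S' ∧ φ a = b)
    (hcyc : ∀ (n : ℕ) (f : ZMod (n + 1) → S), Function.Injective f →
      (∀ i, E (f i) (f (i + 1))) → (n + 1) ∣ k)
    (hpath : ∀ (n : ℕ) (f : Fin (n + 1) → S), Function.Injective f →
      (∀ i : Fin n, E (f i.castSucc) (f i.succ)) →
      (∀ x, ¬ E x (f 0)) → (∀ x, ¬ E (f (Fin.last n)) x) → n < k)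
    (s : S) (d : ℕ) (hd : k ∣ d) (hchain : ∀ j < d, φ^[j] s ∈ S') :
    φ^[d] s = s := by
  classical
  rcases Nat.eq_zero_or_pos d with hd0 | hdpos
  · simp [hd0]
  have hkd : k ≤ d := Nat.le_of_dvd hdpos hd
  by_cases hfwd : ∀ j, φ^[j] s ∈ S'
  · -- forward orbit infinite: pigeonhole gives a cycle through s
    obtain ⟨a, b, hne, heq⟩ := Finite.exists_ne_map_eq_of_infinite (fun j : ℕ => φ^[j] s)
    have key : ∀ a b : ℕ, a < b → φ^[a] s = φ^[b] s → φ^[d] s = s := by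
      intro a b hab heq
      have h2 : φ^[a] (φ^[b - a] s) = φ^[a] s := by
        rw [← Function.iterate_add_apply, Nat.add_sub_cancel' hab.le]
        exact heq.symm
      have h3 := psiAux_cancel hinj a (φ^[b - a] s) s
        (fun j _ => by rw [← Function.iterate_add_apply]; exact hfwd _)
        (fun j _ => hfwd _) h2
      exact psiAux_period hinj hE hcyc s (b - a) (by omega) h3 (fun j _ => hfwd _) d hd
    rcases Nat.lt_or_ge a b with hab | hab
    · exact key a b hab heq
    · exact key b a (by omega) heq.symm
  -- forward orbit leaves S' at step D ≥ d
  push_neg at hfwd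
  set D := Nat.find hfwd with hDdef
  have hD : φ^[D] s ∉ S' := Nat.find_spec hfwd
  have hDmin : ∀ j < D, φ^[j] s ∈ S' := fun j hj => by
    by_contra h; exact Nat.find_min hfwd hj h
  have hdD : d ≤ D := by
    by_contra h
    exact hD (hchain D (by omega))
  -- partial inverse g
  set g : S → S := fun y => if h : y ∈ φ '' S' then h.choose else y with hgdef
  have hg : ∀ y (hy : y ∈ φ '' S'), g y ∈ S' ∧ φ (g y) = y := by
    intro y hy
    simp only [hgdef, dif_pos hy]
    exact ⟨hy.choose_spec.1, hy.choose_spec.2⟩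
  by_cases hbwd : ∀ j, g^[j] s ∈ φ '' S'
  · -- backward orbit infinite: s lies on a cycle
    have hstep : ∀ j, 0 < j → φ (g^[j] s) = g^[j - 1] s := by
      intro j hj
      obtain ⟨j', rfl⟩ : ∃ j', j = j' + 1 := ⟨j - 1, by omega⟩
      rw [Function.iterate_succ_apply']
      simpa using (hg _ (hbwd j')).2
    have hgS : ∀ m, 0 < m → g^[m] s ∈ S' := by
      intro m hm
      obtain ⟨m', rfl⟩ : ∃ m', m = m' + 1 := ⟨m - 1, by omega⟩
      rw [Function.iterate_succ_apply']
      exact (hg _ (hbwd m')).1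
    have hback : ∀ i j, i ≤ j → φ^[i] (g^[j] s) = g^[j - i] s := by
      intro i
      induction i with
      | zero => simp
      | succ i ih =>
        intro j hij
        rw [Function.iterate_succ_apply, hstep j (by omega)]
        rw [ih (j - 1) (by omega)]
        congr 1
        omega
    obtain ⟨a, b, hne, heq⟩ := Finite.exists_ne_map_eq_of_infinite (fun j : ℕ => g^[j] s)
    have key : ∀ a b : ℕ, a < b → g^[a] s = g^[b] s → φ^[d] s = s := by
      intro a b hab heq
      set y := g^[b] s with hydef
      have hpery : φ^[b - a] y = y := by
        rw [hback (b - a) b (by omega)]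
        have : b - (b - a) = a := by omega
        rw [this, ← heq]
      have hchainy : ∀ j < b - a, φ^[j] y ∈ S' := by
        intro j hj
        rw [hback j b (by omega)]
        exact hgS _ (by omega)
      have hy := psiAux_period hinj hE hcyc y (b - a) (by omega) hpery hchainy d hd
      have hsby : φ^[b] y = s := by rw [hback b b le_rfl]; simp
      calc φ^[d] s = φ^[d] (φ^[b] y) := by rw [hsby]
        _ = φ^[d + b] y := (Function.iterate_add_apply φ d b y).symm
        _ = φ^[b + d] y := by rw [Nat.add_comm]
        _ = φ^[b] (φ^[d] y) := Function.iterate_add_apply φ b d y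
        _ = φ^[b] y := by rw [hy]
        _ = s := hsby
    rcases Nat.lt_or_ge a b with hab | hab
    · exact key a b hab heq
    · exact key b a (by omega) heq.symm
  · -- both directions terminate: maximal path, contradiction with hpath
    push_neg at hbwd
    set B := Nat.find hbwd with hBdef
    have hB : g^[B] s ∉ φ '' S' := Nat.find_spec hbwd
    have hBmin : ∀ j < B, g^[j] s ∈ φ '' S' := fun j hj => by
      by_contra h; exact Nat.find_min hbwd hj h
    set u := g^[B] s with hudef
    have hstepB : ∀ j < B, φ (g^[j + 1] s) = g^[j] s := by
      intro j hj
      rw [Function.iterate_succ_apply']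
      exact (hg _ (hBmin j hj)).2
    have hgSB : ∀ m, 0 < m → m ≤ B → g^[m] s ∈ S' := by
      intro m hm hmB
      obtain ⟨m', rfl⟩ : ∃ m', m = m' + 1 := ⟨m - 1, by omega⟩
      rw [Function.iterate_succ_apply']
      exact (hg _ (hBmin m' (by omega))).1
    have hback2 : ∀ i ≤ B, φ^[i] u = g^[B - i] s := by
      intro i
      induction i with
      | zero => simp [hudef]
      | succ i ih =>
        intro hiB
        rw [Function.iterate_succ_apply', ih (by omega)]
        have : B - i = (B - (i + 1)) + 1 := by omega
        rw [this, hstepB _ (by omega)]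
    have hphiB : φ^[B] u = s := by rw [hback2 B le_rfl]; simp
    have hchainU : ∀ j < B + D, φ^[j] u ∈ S' := by
      intro j hj
      rcases Nat.lt_or_ge j B with hjB | hjB
      · rw [hback2 j hjB.le]
        exact hgSB _ (by omega) (by omega)
      · have : φ^[j] u = φ^[j - B] s := by
          conv_lhs => rw [show j = (j - B) + B by omega]
          rw [Function.iterate_add_apply, hphiB]
        rw [this]
        exact hDmin _ (by omega)
    have hlast : φ^[B + D] u ∉ S' := by
      have : φ^[B + D] u = φ^[D] s := by
        rw [Nat.add_comm, Function.iterate_add_apply, hphiB]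
      rw [this]; exact hD
    have hinj2 : ∀ p q : ℕ, p < q → q ≤ B + D → φ^[p] u = φ^[q] u → False := by
      intro p q hpq hqN heq
      have h2 : φ^[p] (φ^[q - p] u) = φ^[p] u := by
        rw [← Function.iterate_add_apply, Nat.add_sub_cancel' hpq.le]
        exact heq.symm
      have h3 := psiAux_cancel hinj p (φ^[q - p] u) u
        (fun j hj => by
          rw [← Function.iterate_add_apply]
          exact hchainU _ (by omega))
        (fun j hj => hchainU _ (by omega)) h2
      apply hB
      obtain ⟨m, hm⟩ : ∃ m, q - p = m + 1 := ⟨q - p - 1, by omega⟩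
      have hu : u = φ (φ^[m] u) := by
        conv_lhs => rw [← h3]
        rw [hm, Function.iterate_succ_apply']
      exact ⟨φ^[m] u, hchainU _ (by omega), hu.symm⟩
    have hlt := hpath (B + D) (fun j : Fin (B + D + 1) => φ^[j.val] u)
      (by
        intro p q hpq
        simp only at hpq
        by_contra hne
        have hv : p.val ≠ q.val := fun h => hne (Fin.val_injective h)
        rcases Nat.lt_or_ge p.val q.val with h | h
        · exact hinj2 p.val q.val h (by omega) hpq
        · exact hinj2 q.val p.val (by omega) (by omega) hpq.symm)
      (by
        intro i
        rw [hE]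
        refine ⟨hchainU i.val i.isLt, ?_⟩
        show φ (φ^[i.castSucc.val] u) = φ^[i.succ.val] u
        rw [Fin.coe_castSucc, Fin.val_succ, Function.iterate_succ_apply'])
      (by
        intro x hx
        rw [hE] at hx
        apply hB
        exact ⟨x, hx.1, by simpa using hx.2⟩)
      (by
        intro x hx
        rw [hE] at hx
        exact hlast (by simpa using hx.1))
    omega


open Classical in
noncomputable def psiStep {S : Type*} (S' : Set S) (φ : S → S) (k : ℕ) :
    Option (ZMod k × S) → Option (ZMod k × S) :=
  fun o => o.bind fun x => if x.2 ∈ S' then some (x.1 + 1, φ x.2) else none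

lemma psiStep_none {S : Type*} (S' : Set S) (φ : S → S) (k : ℕ) (m : ℕ) :
    (psiStep S' φ k)^[m] none = none := by
  induction m with
  | zero => rfl
  | succ m ih => rw [Function.iterate_succ_apply]; exact ih

lemma psiStep_iter {S : Type*} (S' : Set S) (φ : S → S) (k : ℕ) :
    ∀ (m : ℕ) (i : ZMod k) (s : S),
      ((psiStep S' φ k)^[m] (some (i, s))).isSome →
      (∀ j < m, φ^[j] s ∈ S') ∧
        (psiStep S' φ k)^[m] (some (i, s)) = some (i + (m : ZMod k), φ^[m] s) := by
  intro m
  induction m with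
  | zero => intro i s _; simp
  | succ m ih =>
    intro i s hsome
    rw [Function.iterate_succ_apply] at hsome ⊢
    by_cases hs : s ∈ S'
    · have hstep : psiStep S' φ k (some (i, s)) = some (i + 1, φ s) := by
        simp [psiStep, hs]
      rw [hstep] at hsome ⊢
      obtain ⟨hchain, hval⟩ := ih (i + 1) (φ s) hsome
      constructor
      · intro j hj
        match j with
        | 0 => simpa using hs
        | j + 1 =>
          rw [Function.iterate_succ_apply]
          exact hchain j (by omega)
      · rw [hval, Function.iterate_succ_apply]
        congr 1
        push_cast
        ring
    · have hstep : psiStep S' φ k (some (i, s)) = none := by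
        simp [psiStep, hs]
      rw [hstep, psiStep_none] at hsome
      simp at hsome

lemma psiStep_eqv {S : Type*} {S' : Set S} {φ : S → S} {k : ℕ}
    {r : ZMod k × S → ZMod k × S → Prop}
    (hr : ∀ x y, r x y ↔ x.2 ∈ S' ∧ y = (x.1 + 1, φ x.2)) :
    ∀ x y, Relation.EqvGen r x y →
      ∃ m n : ℕ, (psiStep S' φ k)^[m] (some x) = (psiStep S' φ k)^[n] (some y) ∧
        ((psiStep S' φ k)^[m] (some x)).isSome := by
  intro x y h
  induction h with
  | rel x y hxy =>
    obtain ⟨hx, hy⟩ := (hr x y).mp hxy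
    refine ⟨1, 0, ?_, ?_⟩
    · simp [psiStep, hx, hy]
    · simp [psiStep, hx]
  | refl x => exact ⟨0, 0, rfl, by simp⟩
  | symm x y _ ih =>
    obtain ⟨m, n, heq, hsome⟩ := ih
    exact ⟨n, m, heq.symm, heq ▸ hsome⟩
  | trans x y z _ _ ih1 ih2 =>
    obtain ⟨m, n, h1, hs1⟩ := ih1
    obtain ⟨p, q, h2, hs2⟩ := ih2
    rcases le_or_gt n p with hnp | hpn
    · refine ⟨(p - n) + m, q, ?_, ?_⟩
      · rw [Function.iterate_add_apply, h1, ← Function.iterate_add_apply,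
          Nat.sub_add_cancel hnp, h2]
      · rw [Function.iterate_add_apply, h1, ← Function.iterate_add_apply,
          Nat.sub_add_cancel hnp, h2]
        rw [← h2]
        exact hs2
    · refine ⟨m, (n - p) + q, ?_, ?_⟩
      · rw [Function.iterate_add_apply, ← h2, ← Function.iterate_add_apply,
          Nat.sub_add_cancel hpn.le, h1]
      · exact hs1

theorem psi_injective
    (S : Type*) [Fintype S] (S' S'' : Set S) (φ : S → S)
    (hmap : ∀ s ∈ S', φ s ∈ S'')
    (hinj : Set.InjOn φ S')
    (hsurj : S'' ⊆ φ '' S')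
    (k : ℕ) (hk : 0 < k)
    (E : S → S → Prop)
    (hE : ∀ a b, E a b ↔ a ∈ S' ∧ φ a = b)
    -- k is a multiple of the length of every directed cycle of Λ
    (hcyc : ∀ (n : ℕ) (f : ZMod (n + 1) → S), Function.Injective f →
      (∀ i, E (f i) (f (i + 1))) → (n + 1) ∣ k)
    -- k exceeds the length of every non-closed directed path component of Λ
    (hpath : ∀ (n : ℕ) (f : Fin (n + 1) → S), Function.Injective f →
      (∀ i : Fin n, E (f i.castSucc) (f i.succ)) →
      (∀ x, ¬ E x (f 0)) → (∀ x, ¬ E (f (Fin.last n)) x) → n < k)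
    -- the relation generating the quotient S̄ of ℤ/k × S
    (r : ZMod k × S → ZMod k × S → Prop)
    (hr : ∀ x y, r x y ↔ x.2 ∈ S' ∧ y = (x.1 + 1, φ x.2)) :
    ∀ (i : ZMod k) (s t : S), Relation.EqvGen r (i, s) (i, t) → s = t := by
  intro i s t hgen
  obtain ⟨m, n, heq, hsome⟩ := psiStep_eqv hr (i, s) (i, t) hgen
  obtain ⟨hchs, hvals⟩ := psiStep_iter S' φ k m i s hsome
  have hsome' : ((psiStep S' φ k)^[n] (some (i, t))).isSome := heq ▸ hsome
  obtain ⟨hcht, hvalt⟩ := psiStep_iter S' φ k n i t hsome'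
  rw [hvals, hvalt] at heq
  have hfst : (m : ZMod k) = (n : ZMod k) := by
    have := (Option.some.injEq _ _).mp heq
    have h1 : i + (m : ZMod k) = i + (n : ZMod k) := congrArg Prod.fst this
    exact add_left_cancel h1
  have hsnd : φ^[m] s = φ^[n] t := congrArg Prod.snd ((Option.some.injEq _ _).mp heq)
  have hmod : m ≡ n [MOD k] := (ZMod.natCast_eq_natCast_iff m n k).mp hfst
  -- a one-sided helper
  have main : ∀ (m n : ℕ) (s t : S), n ≤ m → m ≡ n [MOD k] →
      (∀ j < m, φ^[j] s ∈ S') → (∀ j < n, φ^[j] t ∈ S') →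
      φ^[m] s = φ^[n] t → s = t := by
    intro m n s t hnm hmod hchs hcht hiter
    have hdvd : k ∣ m - n := (Nat.modEq_iff_dvd' hnm).mp hmod.symm
    have hsplit : φ^[n] (φ^[m - n] s) = φ^[n] t := by
      rw [← Function.iterate_add_apply, Nat.add_sub_cancel' hnm]
      exact hiter
    have hcanc := psiAux_cancel hinj n (φ^[m - n] s) t
      (fun j hj => by
        rw [← Function.iterate_add_apply]
        exact hchs _ (by omega))
      hcht hsplit
    have hret := psiAux_return hk hinj hE hcyc hpath s (m - n) hdvd
      (fun j hj => hchs _ (by omega))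
    rw [hret] at hcanc
    exact hcanc
  rcases le_total n m with h | h
  · exact main m n s t h hmod hchs hcht hsnd
  · exact (main n m t s h hmod.symm hcht hchs hsnd.symm).symm
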